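/- Let I ⊆ ℝ be an open interval, let C, Λ, R⋆ ∈ ℝ, and let a : I → ℝ be a twice differentiable positive function satisfying the pressure-free modified Friedmann equation 0 = 2·(d/dt)(a'(t)·√(a(t))) + (5/6)C·a(t)^{7/2} − Λ·a(t)^{3/2} + (R⋆/6)·a(t)^{−1/2} on I. Then there exists a constant D ∈ ℝ such that for all t ∈ I, (a'(t)/a(t))² = −(C/6)a(t)² + Λ/3 − R⋆/(6a(t)²) + D/a(t)³. -/

import Mathlib

/-- The pressure-free first modified Friedmann equation of Conformal Killing gravity,
`0 = 2 d/dt(ȧ √a) + (5/6) C a^{7/2} - Λ a^{3/2} + (R⋆/6) a^{-1/2}`, has the first integral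
`(ȧ/a)² = -(C/6) a² + Λ/3 - R⋆/(6a²) + D/a³`. -/
theorem friedmann_first_integral
    (I : Set ℝ) (hIopen : IsOpen I) (hIconn : IsPreconnected I)
    (C Λ Rstar : ℝ) (a a' a'' : ℝ → ℝ)
    (ha' : ∀ t ∈ I, HasDerivAt a (a' t) t)
    (ha'' : ∀ t ∈ I, HasDerivAt a' (a'' t) t)
    (hapos : ∀ t ∈ I, a t > 0)
    (hODE : ∀ t ∈ I, 0 = 2 * deriv (fun s => a' s * Real.sqrt (a s)) t
      + (5/6) * C * (a t) ^ ((7:ℝ)/2) - Λ * (a t) ^ ((3:ℝ)/2)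
      + (Rstar/6) * (a t) ^ (-(1:ℝ)/2)) :
    ∃ D : ℝ, ∀ t ∈ I, (a' t / a t) ^ 2
      = -(C/6) * (a t) ^ 2 + Λ/3 - Rstar / (6 * (a t) ^ 2) + D / (a t) ^ 3 := by
  set F : ℝ → ℝ := fun t => (a' t) ^ 2 * a t + (C/6) * (a t) ^ 5
      - (Λ/3) * (a t) ^ 3 + (Rstar/6) * a t with hF
  -- F has derivative 0 on I
  have hFderiv : ∀ t ∈ I, HasDerivAt F 0 t := by
    intro t ht
    have hpos := hapos t ht
    have hsne : Real.sqrt (a t) ≠ 0 := by positivity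
    have hspos : 0 < Real.sqrt (a t) := Real.sqrt_pos.2 hpos
    have hane : a t ≠ 0 := ne_of_gt hpos
    -- derivative of a' * sqrt a
    have hg : HasDerivAt (fun s => a' s * Real.sqrt (a s))
        (a'' t * Real.sqrt (a t) + a' t * (a' t / (2 * Real.sqrt (a t)))) t :=
      (ha'' t ht).mul ((ha' t ht).sqrt hane)
    have hODEt := hODE t ht
    rw [hg.deriv] at hODEt
    -- rewrite rpow in terms of sqrt powers
    have hs2 : Real.sqrt (a t) ^ 2 = a t := Real.sq_sqrt hpos.le
    have h7 : (a t) ^ ((7:ℝ)/2) = Real.sqrt (a t) ^ 7 := by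
      rw [Real.sqrt_eq_rpow, ← Real.rpow_natCast (a t ^ ((1:ℝ)/2)) 7,
        ← Real.rpow_mul hpos.le]
      norm_num
    have h3 : (a t) ^ ((3:ℝ)/2) = Real.sqrt (a t) ^ 3 := by
      rw [Real.sqrt_eq_rpow, ← Real.rpow_natCast (a t ^ ((1:ℝ)/2)) 3,
        ← Real.rpow_mul hpos.le]
      norm_num
    have hm1 : (a t) ^ (-(1:ℝ)/2) = 1 / Real.sqrt (a t) := by
      have he : (-(1:ℝ))/2 = -(1/2 : ℝ) := by norm_num
      rw [he, Real.rpow_neg hpos.le, Real.sqrt_eq_rpow, one_div]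
      norm_num
    rw [h7, h3, hm1] at hODEt
    -- derivative of F
    have hFd : HasDerivAt F
        ((2 * a' t * a'' t) * a t + a' t ^ 2 * a' t
          + (C/6) * (5 * a t ^ 4 * a' t) - (Λ/3) * (3 * a t ^ 2 * a' t)
          + (Rstar/6) * a' t) t := by
      have h1 : HasDerivAt (fun s => (a' s) ^ 2 * a s)
          ((2 * a' t ^ 1 * a'' t) * a t + a' t ^ 2 * a' t) t :=
        ((ha'' t ht).pow 2).mul (ha' t ht)
      have h2 : HasDerivAt (fun s => (C/6) * (a s) ^ 5)
          ((C/6) * (5 * a t ^ 4 * a' t)) t := by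
        have := ((ha' t ht).pow 5).const_mul (C/6)
        simpa [mul_comm, mul_assoc, mul_left_comm] using this
      have h3' : HasDerivAt (fun s => (Λ/3) * (a s) ^ 3)
          ((Λ/3) * (3 * a t ^ 2 * a' t)) t := by
        have := ((ha' t ht).pow 3).const_mul (Λ/3)
        simpa [mul_comm, mul_assoc, mul_left_comm] using this
      have h4 : HasDerivAt (fun s => (Rstar/6) * a s) ((Rstar/6) * a' t) t :=
        (ha' t ht).const_mul (Rstar/6)
      have := ((h1.add h2).sub h3').add h4
      simp only [pow_one] at this
      exact this
    convert hFd using 1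
    -- show the derivative is zero using the ODE
    field_simp at hODEt
    have hrw : a t = Real.sqrt (a t) ^ 2 := hs2.symm
    rw [hrw]
    have hz : (72 * Real.sqrt (a t)) *
        ((2 * a' t * a'' t) * Real.sqrt (a t) ^ 2 + a' t ^ 2 * a' t
          + (C/6) * (5 * (Real.sqrt (a t) ^ 2) ^ 4 * a' t)
          - (Λ/3) * (3 * (Real.sqrt (a t) ^ 2) ^ 2 * a' t)
          + (Rstar/6) * a' t) = 0 := by linear_combination (-(12 * Real.sqrt (a t) * a' t)) * hODEt
    have h72 : (72 * Real.sqrt (a t)) ≠ 0 := by positivity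
    exact ((mul_eq_zero.mp hz).resolve_left h72).symm
  -- F is constant on I
  rcases Set.eq_empty_or_nonempty I with hI | ⟨t0, ht0⟩
  · exact ⟨0, fun t ht => absurd ht (by simp [hI])⟩
  have hconv : Convex ℝ I := hIconn.ordConnected.convex
  have hconst : ∀ t ∈ I, F t = F t0 := by
    intro t ht
    have h := hconv.norm_image_sub_le_of_norm_hasDerivWithin_le
      (f := F) (f' := fun _ => (0:ℝ)) (C := 0)
      (fun x hx => (hFderiv x hx).hasDerivWithinAt)
      (fun x _ => by simp) ht0 ht
    rw [zero_mul] at h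
    have := norm_le_zero_iff.1 h
    linarith [sub_eq_zero.mp this]
  refine ⟨F t0, fun t ht => ?_⟩
  have hpos := hapos t ht
  have hane : a t ≠ 0 := ne_of_gt hpos
  have hc := hconst t ht
  simp only [hF] at hc
  field_simp
  linear_combination 18 * hc
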